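/- Let ρ_p(m,d) = (Λ_p ⊗ Λ_p)(|ψ_m⟩⟨ψ_m|) where |ψ_m⟩ = (1/√m) Σ_{i=1}^m |ii⟩. Then the eigenvalues of ρ_p(m,d) are: (4p/3d)² + (8p/3dm)(1 − 4p/3) + (1 − 4p/3)² with multiplicity 1; (4p/3d)² + (8p/3dm)(1 − 4p/3) with multiplicity m² − 1; (4p/3d)² + (4p/3dm)(1 − 4p/3) with multiplicity 2m(d − m); and (4p/3d)² with multiplicity (d − m)². -/

import Mathlib

open Matrix Kronecker

variable {d : ℕ}

/-- Partial trace over the first qudit. -/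
noncomputable def ptraceFst (ρ : Matrix (Fin d × Fin d) (Fin d × Fin d) ℂ) :
    Matrix (Fin d) (Fin d) ℂ :=
  Matrix.of fun i j => ∑ k : Fin d, ρ (k, i) (k, j)

/-- Partial trace over the second qudit. -/
noncomputable def ptraceSnd (ρ : Matrix (Fin d × Fin d) (Fin d × Fin d) ℂ) :
    Matrix (Fin d) (Fin d) ℂ :=
  Matrix.of fun i j => ∑ k : Fin d, ρ (i, k) (j, k)

/-- The two-qudit local depolarizing channel `Λ_p ⊗ Λ_p`, with `ε = 1 - 4p/3`:
`ε² ρ + ε(1-ε)((I/d) ⊗ tr₁ρ + tr₂ρ ⊗ (I/d)) + (1-ε)² (Tr ρ) (I/d) ⊗ (I/d)`. -/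
noncomputable def depol2 (p : ℝ) (ρ : Matrix (Fin d × Fin d) (Fin d × Fin d) ℂ) :
    Matrix (Fin d × Fin d) (Fin d × Fin d) ℂ :=
  (((1 - 4 * p / 3) ^ 2 : ℝ) : ℂ) • ρ +
    (((1 - 4 * p / 3) * (4 * p / 3) : ℝ) : ℂ) •
      ((((d : ℝ)⁻¹ : ℝ) : ℂ) • ((1 : Matrix (Fin d) (Fin d) ℂ) ⊗ₖ ptraceFst ρ) +
        (((d : ℝ)⁻¹ : ℝ) : ℂ) • (ptraceSnd ρ ⊗ₖ (1 : Matrix (Fin d) (Fin d) ℂ))) +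
    ((((4 * p / 3) ^ 2 / (d : ℝ) ^ 2 : ℝ) : ℂ) * ρ.trace) •
      ((1 : Matrix (Fin d) (Fin d) ℂ) ⊗ₖ (1 : Matrix (Fin d) (Fin d) ℂ))

/-- The rank-`m` maximally entangled two-qudit probe `|ψ_m⟩ = (1/√m) Σ_{i<m} |ii⟩`. -/
noncomputable def psiVec (m : ℕ) : Fin d × Fin d → ℂ :=
  fun x => if x.1 = x.2 ∧ (x.1 : ℕ) < m then ((Real.sqrt m)⁻¹ : ℝ) else 0

/-! ### Auxiliary counting lemmas -/

lemma card_filter_lt (d m : ℕ) (hmd : m ≤ d) :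
    (Finset.univ.filter (fun i : Fin d => (i : ℕ) < m)).card = m := by
  have : (Finset.univ.filter (fun i : Fin d => (i : ℕ) < m))
      = Finset.map (Fin.castLEEmb hmd) Finset.univ := by
    ext i
    simp only [Finset.mem_filter, Finset.mem_univ, true_and, Finset.mem_map]
    constructor
    · intro h
      exact ⟨⟨(i : ℕ), h⟩, by ext; simp⟩
    · rintro ⟨j, hj⟩
      obtain ⟨-, rfl⟩ := hj
      simpa using j.2.trans_le hmd
  rw [this]
  simp

lemma prod_ite_count {β : Type*} [CommMonoid β] (d m : ℕ) (hmd : m ≤ d) (a b : β) :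
    (∏ i : Fin d, (if (i : ℕ) < m then a else b)) = a ^ m * b ^ (d - m) := by
  rw [Finset.prod_ite, Finset.prod_const, Finset.prod_const, card_filter_lt d m hmd]
  congr 2
  have h := Finset.card_filter_add_card_filter_not
    (s := (Finset.univ : Finset (Fin d))) (fun i : Fin d => (i : ℕ) < m)
  rw [card_filter_lt d m hmd] at h
  simp only [Finset.card_univ, Fintype.card_fin] at h
  omega

lemma sum_diag_ind (d m : ℕ) (hmd : m ≤ d) (c : ℂ) :
    (∑ i : Fin d × Fin d, (if i.1 = i.2 ∧ (i.1 : ℕ) < m then c else 0)) = (m : ℂ) * c := by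
  rw [Fintype.sum_prod_type]
  have h1 : ∀ a : Fin d, (∑ b : Fin d, (if a = b ∧ (a : ℕ) < m then c else 0))
      = if (a : ℕ) < m then c else 0 := by
    intro a
    by_cases h : (a : ℕ) < m <;> simp [h]
  rw [Finset.sum_congr rfl fun a _ => h1 a, Finset.sum_ite, Finset.sum_const,
    Finset.sum_const_zero, add_zero, card_filter_lt d m hmd, nsmul_eq_mul]

lemma eval_charpoly' {n : Type*} [DecidableEq n] [Fintype n] (M : Matrix n n ℂ) (x : ℂ) :
    M.charpoly.eval x = (Matrix.diagonal (fun _ => x) - M).det := by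
  rw [Matrix.charpoly, ← Polynomial.coe_evalRingHom, RingHom.map_det]
  congr 1
  ext i j
  by_cases h : i = j <;>
    simp [h, Matrix.charmatrix_apply, Matrix.diagonal_apply, Matrix.map_apply, Matrix.sub_apply]

/-! ### Computation of the output state -/

noncomputable def qfun (m : ℕ) : Fin d → ℂ :=
  fun i => if (i : ℕ) < m then (((m : ℝ)⁻¹ : ℝ) : ℂ) else 0

noncomputable def Dg (m : ℕ) (p : ℝ) : Fin d × Fin d → ℂ :=
  fun x => (((1 - 4 * p / 3) * (4 * p / 3) * (d : ℝ)⁻¹ : ℝ) : ℂ) * (qfun m x.1 + qfun m x.2)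
    + (((4 * p / 3) ^ 2 / (d : ℝ) ^ 2 : ℝ) : ℂ)

lemma star_psi (m : ℕ) : star (psiVec (d := d) m) = psiVec (d := d) m := by
  funext x
  simp [psiVec, Pi.star_apply, apply_ite (star : ℂ → ℂ), Complex.star_def, Complex.conj_ofReal]

lemma psi_mul (m : ℕ) (x y : Fin d × Fin d) :
    psiVec (d := d) m x * psiVec (d := d) m y =
      if (x.1 = x.2 ∧ (x.1 : ℕ) < m) ∧ (y.1 = y.2 ∧ (y.1 : ℕ) < m)
        then (((m : ℝ)⁻¹ : ℝ) : ℂ) else 0 := by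
  simp only [psiVec]
  by_cases h1 : x.1 = x.2 ∧ (x.1 : ℕ) < m
  · by_cases h2 : y.1 = y.2 ∧ (y.1 : ℕ) < m
    · rw [if_pos h1, if_pos h2, if_pos ⟨h1, h2⟩, ← Complex.ofReal_mul, ← mul_inv,
        Real.mul_self_sqrt (Nat.cast_nonneg m)]
    · rw [if_neg h2, mul_zero, if_neg (fun h => h2 h.2)]
  · rw [if_neg h1, zero_mul, if_neg (fun h => h1 h.1)]

lemma ptraceFst_psi (m : ℕ) :
    ptraceFst (Matrix.vecMulVec (psiVec (d := d) m) (star (psiVec (d := d) m)))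
      = Matrix.diagonal (qfun m) := by
  rw [star_psi]
  ext i j
  simp only [ptraceFst, Matrix.of_apply, Matrix.vecMulVec_apply]
  have h : ∀ k : Fin d, psiVec (d := d) m (k, i) * psiVec (d := d) m (k, j)
      = if k = i then (if i = j ∧ (i : ℕ) < m then (((m : ℝ)⁻¹ : ℝ) : ℂ) else 0) else 0 := by
    intro k
    rw [psi_mul]
    by_cases hk : k = i <;> by_cases hij : i = j <;> by_cases him : (i : ℕ) < m <;>
      simp_all
  rw [Finset.sum_congr rfl fun k _ => h k, Finset.sum_ite_eq' Finset.univ i]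
  by_cases hij : i = j <;> by_cases him : (i : ℕ) < m <;>
    simp_all [Matrix.diagonal_apply, qfun]

lemma ptraceSnd_psi (m : ℕ) :
    ptraceSnd (Matrix.vecMulVec (psiVec (d := d) m) (star (psiVec (d := d) m)))
      = Matrix.diagonal (qfun m) := by
  rw [star_psi]
  ext i j
  simp only [ptraceSnd, Matrix.of_apply, Matrix.vecMulVec_apply]
  have h : ∀ k : Fin d, psiVec (d := d) m (i, k) * psiVec (d := d) m (j, k)
      = if k = i then (if i = j ∧ (i : ℕ) < m then (((m : ℝ)⁻¹ : ℝ) : ℂ) else 0) else 0 := by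
    intro k
    rw [psi_mul]
    by_cases hk : k = i
    · by_cases hij : i = j
      · by_cases him : (i : ℕ) < m
        · rw [if_pos ⟨⟨hk.symm, him⟩, hij.symm.trans hk.symm, by rw [← hij]; exact him⟩,
            if_pos hk, if_pos ⟨hij, him⟩]
        · rw [if_neg (fun h => him h.1.2), if_pos hk, if_neg (fun h => him h.2)]
      · rw [if_neg (fun h => hij (h.1.1.trans h.2.1.symm)), if_pos hk,
          if_neg (fun h => hij h.1)]
    · rw [if_neg (fun h => hk h.1.1.symm), if_neg hk]
  rw [Finset.sum_congr rfl fun k _ => h k, Finset.sum_ite_eq' Finset.univ i]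
  by_cases hij : i = j <;> by_cases him : (i : ℕ) < m <;>
    simp_all [Matrix.diagonal_apply, qfun]

lemma trace_psi (m : ℕ) (hm : 1 ≤ m) (hmd : m ≤ d) :
    (Matrix.vecMulVec (psiVec (d := d) m) (star (psiVec (d := d) m))).trace = 1 := by
  rw [star_psi]
  have hm0 : (m : ℂ) ≠ 0 := Nat.cast_ne_zero.mpr (by omega)
  rw [Matrix.trace]
  have h : ∀ x : Fin d × Fin d, (Matrix.vecMulVec (psiVec (d := d) m) (psiVec (d := d) m)).diag x
      = if x.1 = x.2 ∧ (x.1 : ℕ) < m then (((m : ℝ)⁻¹ : ℝ) : ℂ) else 0 := by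
    intro x
    rw [Matrix.diag_apply, Matrix.vecMulVec_apply, psi_mul]
    simp
  rw [Finset.sum_congr rfl fun x _ => h x, sum_diag_ind d m hmd]
  field_simp
  push_cast
  field_simp

lemma depol2_psi_eq (m : ℕ) (hm : 1 ≤ m) (hmd : m ≤ d) (p : ℝ) :
    depol2 p (Matrix.vecMulVec (psiVec (d := d) m) (star (psiVec (d := d) m))) =
      Matrix.diagonal (Dg m p) +
        (((1 - 4 * p / 3) ^ 2 : ℝ) : ℂ) •
          Matrix.vecMulVec (psiVec (d := d) m) (psiVec (d := d) m) := by
  simp only [depol2]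
  rw [ptraceFst_psi, ptraceSnd_psi, trace_psi m hm hmd, mul_one, star_psi]
  rw [← Matrix.diagonal_one, Matrix.diagonal_kronecker_diagonal,
    Matrix.diagonal_kronecker_diagonal, Matrix.diagonal_kronecker_diagonal]
  ext x y
  by_cases hxy : x = y <;>
    simp only [Matrix.add_apply, Matrix.smul_apply, Matrix.diagonal_apply, hxy, if_true,
      if_false, smul_eq_mul, Dg, mul_zero, mul_one, one_mul, add_zero, zero_add,
      smul_zero, mul_ite]
  · push_cast
    ring

lemma Dg_val (m : ℕ) (hm : 1 ≤ m) (hmd : m ≤ d) (p : ℝ) (x : Fin d × Fin d) :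
    Dg (d := d) m p x =
      if (x.1 : ℕ) < m then
        (if (x.2 : ℕ) < m then
          (((4 * p / (3 * d)) ^ 2 + (8 * p / (3 * d * m)) * (1 - 4 * p / 3) : ℝ) : ℂ)
        else (((4 * p / (3 * d)) ^ 2 + (4 * p / (3 * d * m)) * (1 - 4 * p / 3) : ℝ) : ℂ))
      else
        (if (x.2 : ℕ) < m then
          (((4 * p / (3 * d)) ^ 2 + (4 * p / (3 * d * m)) * (1 - 4 * p / 3) : ℝ) : ℂ)
        else (((4 * p / (3 * d)) ^ 2 : ℝ) : ℂ)) := by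
  have hm0 : (m : ℝ) ≠ 0 := Nat.cast_ne_zero.mpr (by omega)
  have hd0 : (d : ℝ) ≠ 0 := Nat.cast_ne_zero.mpr (by omega)
  simp only [Dg, qfun]
  by_cases h1 : (x.1 : ℕ) < m <;> by_cases h2 : (x.2 : ℕ) < m <;>
    simp only [h1, h2, if_true, if_false, add_zero, zero_add] <;>
    · norm_cast
      field_simp
      push_cast
      try ring
      try tauto

open Polynomial in
/-- The eigenvalues of `ρ_p(m,d) = (Λ_p ⊗ Λ_p)(|ψ_m⟩⟨ψ_m|)` are
`λ₁ = (4p/3d)² + (8p/3dm)(1−4p/3) + (1−4p/3)²` (multiplicity 1),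
`λ₂ = (4p/3d)² + (8p/3dm)(1−4p/3)` (multiplicity `m²−1`),
`λ₃ = (4p/3d)² + (4p/3dm)(1−4p/3)` (multiplicity `2m(d−m)`), and
`λ₄ = (4p/3d)²` (multiplicity `(d−m)²`), stated via the characteristic polynomial. -/
theorem depol2_output_eigenvalues
    (m : ℕ) (hm : 1 ≤ m) (hmd : m ≤ d) (p : ℝ) (hp0 : 0 ≤ p) (hp1 : p ≤ 3 / 4) :
    (depol2 p (Matrix.vecMulVec (psiVec (d := d) m) (star (psiVec (d := d) m)))).charpoly =
      (X - C (((4 * p / (3 * d)) ^ 2 + (8 * p / (3 * d * m)) * (1 - 4 * p / 3)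
              + (1 - 4 * p / 3) ^ 2 : ℝ) : ℂ)) *
      (X - C (((4 * p / (3 * d)) ^ 2 + (8 * p / (3 * d * m)) * (1 - 4 * p / 3) : ℝ) : ℂ)) ^
          (m ^ 2 - 1) *
      (X - C (((4 * p / (3 * d)) ^ 2 + (4 * p / (3 * d * m)) * (1 - 4 * p / 3) : ℝ) : ℂ)) ^
          (2 * m * (d - m)) *
      (X - C (((4 * p / (3 * d)) ^ 2 : ℝ) : ℂ)) ^ ((d - m) ^ 2) := by
  classical
  have hm0 : (m : ℂ) ≠ 0 := Nat.cast_ne_zero.mpr (by omega)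
  set r1 : ℝ := (4 * p / (3 * d)) ^ 2 + (8 * p / (3 * d * m)) * (1 - 4 * p / 3)
      + (1 - 4 * p / 3) ^ 2 with hr1
  set r2 : ℝ := (4 * p / (3 * d)) ^ 2 + (8 * p / (3 * d * m)) * (1 - 4 * p / 3) with hr2
  set r3 : ℝ := (4 * p / (3 * d)) ^ 2 + (4 * p / (3 * d * m)) * (1 - 4 * p / 3) with hr3
  set r4 : ℝ := (4 * p / (3 * d)) ^ 2 with hr4
  set ε2 : ℂ := (((1 - 4 * p / 3) ^ 2 : ℝ) : ℂ) with hε2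
  apply Polynomial.eq_of_infinite_eval_eq
  have hfin : ({((r2 : ℝ) : ℂ), ((r3 : ℝ) : ℂ), ((r4 : ℝ) : ℂ)} : Set ℂ).Finite :=
    Set.toFinite _
  apply Set.Infinite.mono _ hfin.infinite_compl
  intro x hx
  simp only [Set.mem_compl_iff, Set.mem_insert_iff, Set.mem_singleton_iff, not_or] at hx
  obtain ⟨hx2, hx3, hx4⟩ := hx
  have hx2' : x - ((r2 : ℝ) : ℂ) ≠ 0 := sub_ne_zero.mpr hx2
  have hx3' : x - ((r3 : ℝ) : ℂ) ≠ 0 := sub_ne_zero.mpr hx3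
  have hx4' : x - ((r4 : ℝ) : ℂ) ≠ 0 := sub_ne_zero.mpr hx4
  simp only [Set.mem_setOf_eq]
  rw [depol2_psi_eq m hm hmd p, eval_charpoly']
  simp only [eval_mul, eval_pow, eval_sub, eval_X, eval_C]
  set ψ := psiVec (d := d) m with hψ
  set g : Fin d × Fin d → ℂ := fun i => x - Dg m p i with hg
  have hsplit : Matrix.diagonal (fun _ : Fin d × Fin d => x) -
      (Matrix.diagonal (Dg m p) + ε2 • Matrix.vecMulVec ψ ψ) =
      Matrix.diagonal g + Matrix.replicateCol Unit (fun i => -ε2 * ψ i) * Matrix.replicateRow Unit ψ := by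
    rw [← Matrix.vecMulVec_eq (ι := Unit)]
    ext a b
    by_cases hab : a = b <;>
      simp [Matrix.sub_apply, Matrix.add_apply, Matrix.smul_apply, Matrix.diagonal_apply,
        hab, Matrix.vecMulVec_apply, hg] <;> ring
  rw [hsplit]
  have hgval : ∀ i : Fin d × Fin d, g i =
      if (i.1 : ℕ) < m then (if (i.2 : ℕ) < m then x - ((r2 : ℝ) : ℂ) else x - ((r3 : ℝ) : ℂ))
      else (if (i.2 : ℕ) < m then x - ((r3 : ℝ) : ℂ) else x - ((r4 : ℝ) : ℂ)) := by
    intro i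
    rw [hg]
    simp only
    rw [Dg_val m hm hmd p i]
    split_ifs <;> rfl
  have hgne : ∀ i : Fin d × Fin d, g i ≠ 0 := by
    intro i
    rw [hgval i]
    split_ifs <;> assumption
  have hdet : IsUnit (Matrix.diagonal g).det := by
    rw [Matrix.det_diagonal]
    exact (Finset.prod_ne_zero_iff.mpr fun i _ => hgne i).isUnit
  rw [Matrix.det_add_replicateCol_mul_replicateRow hdet, Matrix.det_diagonal]
  have hinv : (Matrix.diagonal g)⁻¹ = Matrix.diagonal (fun i => (g i)⁻¹) := by
    refine Matrix.inv_eq_right_inv ?_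
    rw [Matrix.diagonal_mul_diagonal,
      show (fun i => g i * (g i)⁻¹) = fun _ => (1 : ℂ) from funext fun i => mul_inv_cancel₀ (hgne i),
      Matrix.diagonal_one]
  rw [hinv]
  -- compute the 1×1 determinant
  have hrowdiag : ∀ i : Fin d × Fin d,
      (Matrix.replicateRow Unit ψ * Matrix.diagonal (fun j => (g j)⁻¹)) () i = ψ i * (g i)⁻¹ := by
    intro i
    simp [Matrix.mul_apply, Matrix.diagonal_apply, mul_ite, Finset.sum_ite_eq']
  have hsummand : ∀ i : Fin d × Fin d,
      (Matrix.replicateRow Unit ψ * Matrix.diagonal (fun j => (g j)⁻¹)) () i *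
        (Matrix.replicateCol Unit (fun j => -ε2 * ψ j) i ()) =
      if i.1 = i.2 ∧ (i.1 : ℕ) < m then
        (((m : ℝ)⁻¹ : ℝ) : ℂ) * ((x - ((r2 : ℝ) : ℂ))⁻¹ * -ε2) else 0 := by
    intro i
    rw [hrowdiag i, Matrix.replicateCol_apply]
    by_cases hi : i.1 = i.2 ∧ (i.1 : ℕ) < m
    · have hgi : g i = x - ((r2 : ℝ) : ℂ) := by
        rw [hgval i, if_pos hi.2, if_pos (hi.1 ▸ hi.2)]
      have hψ2 : ψ i * ψ i = (((m : ℝ)⁻¹ : ℝ) : ℂ) := by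
        rw [hψ, psi_mul, if_pos ⟨hi, hi⟩]
      rw [if_pos hi, hgi]
      calc ψ i * (x - ((r2 : ℝ) : ℂ))⁻¹ * (-ε2 * ψ i)
          = (ψ i * ψ i) * ((x - ((r2 : ℝ) : ℂ))⁻¹ * -ε2) := by ring
        _ = (((m : ℝ)⁻¹ : ℝ) : ℂ) * ((x - ((r2 : ℝ) : ℂ))⁻¹ * -ε2) := by rw [hψ2]
    · have hψ0 : ψ i = 0 := by
        rw [hψ]
        simp only [psiVec]
        exact if_neg hi
      rw [if_neg hi, hψ0]
      ring
  have hdet1 : (1 + Matrix.replicateRow Unit ψ * Matrix.diagonal (fun j => (g j)⁻¹) *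
      Matrix.replicateCol Unit (fun j => -ε2 * ψ j)).det = 1 - ε2 * (x - ((r2 : ℝ) : ℂ))⁻¹ := by
    rw [Matrix.det_unique]
    simp only [Matrix.add_apply, Matrix.one_apply_eq]
    rw [Matrix.mul_apply, Finset.sum_congr rfl fun i _ => hsummand i, sum_diag_ind d m hmd]
    have hmm : (m : ℂ) * (((m : ℝ)⁻¹ : ℝ) : ℂ) = 1 := by
      push_cast
      field_simp
    push_cast
    push_cast at hmm
    field_simp
    ring
  rw [hdet1]
  -- compute the product of diagonal entries
  have hprod : (∏ i : Fin d × Fin d, g i) =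
      ((x - ((r2 : ℝ) : ℂ)) ^ m * (x - ((r3 : ℝ) : ℂ)) ^ (d - m)) ^ m *
      ((x - ((r3 : ℝ) : ℂ)) ^ m * (x - ((r4 : ℝ) : ℂ)) ^ (d - m)) ^ (d - m) := by
    rw [Fintype.prod_prod_type]
    have hrow : ∀ a : Fin d, (∏ b : Fin d, g (a, b)) =
        if (a : ℕ) < m then (x - ((r2 : ℝ) : ℂ)) ^ m * (x - ((r3 : ℝ) : ℂ)) ^ (d - m)
        else (x - ((r3 : ℝ) : ℂ)) ^ m * (x - ((r4 : ℝ) : ℂ)) ^ (d - m) := by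
      intro a
      by_cases ha : (a : ℕ) < m
      · have hb : ∀ b : Fin d, g (a, b) =
            if (b : ℕ) < m then x - ((r2 : ℝ) : ℂ) else x - ((r3 : ℝ) : ℂ) := by
          intro b
          rw [hgval (a, b)]
          simp [ha]
        rw [if_pos ha, Finset.prod_congr rfl fun b _ => hb b, prod_ite_count d m hmd]
      · have hb : ∀ b : Fin d, g (a, b) =
            if (b : ℕ) < m then x - ((r3 : ℝ) : ℂ) else x - ((r4 : ℝ) : ℂ) := by
          intro b
          rw [hgval (a, b)]
          simp [ha]
        rw [if_neg ha, Finset.prod_congr rfl fun b _ => hb b, prod_ite_count d m hmd]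
    rw [Finset.prod_congr rfl fun a _ => hrow a, prod_ite_count d m hmd]
  rw [hprod]
  -- final algebra
  have hone : 1 - ε2 * (x - ((r2 : ℝ) : ℂ))⁻¹ =
      (x - ((r1 : ℝ) : ℂ)) * (x - ((r2 : ℝ) : ℂ))⁻¹ := by
    have hcast : ((r1 : ℝ) : ℂ) = ((r2 : ℝ) : ℂ) + ε2 := by
      rw [hε2, ← Complex.ofReal_add]
      try exact congrArg Complex.ofReal hr1
    rw [hcast]
    field_simp
    try ring
  rw [hone]
  have hmsq : m * m = (m ^ 2 - 1) + 1 := by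
    have h1 : 1 ≤ m * m := Nat.one_le_iff_ne_zero.mpr (by positivity)
    have h2 : m ^ 2 = m * m := sq m
    omega
  have e3 : (d - m) * m + m * (d - m) = 2 * m * (d - m) := by ring
  have e4 : (d - m) * (d - m) = (d - m) ^ 2 := (sq (d - m)).symm
  rw [mul_pow, mul_pow, ← pow_mul, ← pow_mul, ← pow_mul, ← pow_mul, hmsq, pow_succ]
  field_simp
  rw [← e3, ← e4, pow_add]
  ring
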